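/- arXiv:2402.01638 — 3 statements merged into one kernel-verified Lean document; each statement's English description precedes it below -/
import Mathlib

section
/- Let q ≥ 1 and t ≥ 1, and let G be any finite subgroup of the unitary group U(q) of q×q complex unitary matrices. Then (1/|G|)·Σ_{g∈G} |tr(g)|^{2t} ≥ ∫_{U(q)} |tr(U)|^{2t} dU, where the integral is with respect to the unit-normalized Haar measure on U(q). -/
open MeasureTheory Matrix

variable (q : ℕ)

noncomputable instance : MeasurableSpace (Matrix.unitaryGroup (Fin q) ℂ) := borel _
instance : BorelSpace (Matrix.unitaryGroup (Fin q) ℂ) := ⟨rfl⟩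

instance : IsTopologicalGroup (Matrix.unitaryGroup (Fin q) ℂ) where
  continuous_mul := by
    apply continuous_induced_rng.2
    have h1 : Continuous fun p : Matrix.unitaryGroup (Fin q) ℂ × Matrix.unitaryGroup (Fin q) ℂ =>
        ((p.1 : Matrix (Fin q) (Fin q) ℂ), (p.2 : Matrix (Fin q) (Fin q) ℂ)) :=
      (continuous_subtype_val.comp continuous_fst).prodMk (continuous_subtype_val.comp continuous_snd)
    exact (continuous_fst.matrix_mul continuous_snd).comp h1
  continuous_inv := by
    apply continuous_induced_rng.2
    have : (fun a : Matrix.unitaryGroup (Fin q) ℂ => ((a⁻¹ : Matrix.unitaryGroup (Fin q) ℂ) : Matrix (Fin q) (Fin q) ℂ))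
        = fun a : Matrix.unitaryGroup (Fin q) ℂ => star (a : Matrix (Fin q) (Fin q) ℂ) := by
      funext a
      rw [← Unitary.star_eq_inv, Unitary.coe_star]
    show Continuous (fun a : Matrix.unitaryGroup (Fin q) ℂ => ((a⁻¹ : Matrix.unitaryGroup (Fin q) ℂ) : Matrix (Fin q) (Fin q) ℂ))
    rw [this]
    exact continuous_subtype_val.star

instance : CompactSpace (Matrix.unitaryGroup (Fin q) ℂ) := by
  apply isCompact_iff_compactSpace.mp
  have hsub : (Matrix.unitaryGroup (Fin q) ℂ : Set (Matrix (Fin q) (Fin q) ℂ)) ⊆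
      Set.univ.pi fun _ : Fin q => Set.univ.pi fun _ : Fin q => Metric.closedBall (0 : ℂ) 1 := by
    intro U hU
    intro i _ 
    intro j _
    simpa [Complex.dist_eq] using entry_norm_bound_of_unitary hU i j
  have hcomp : IsCompact (Set.univ.pi fun _ : Fin q => Set.univ.pi fun _ : Fin q =>
      Metric.closedBall (0 : ℂ) 1) :=
    isCompact_univ_pi fun _ => isCompact_univ_pi fun _ => isCompact_closedBall 0 1
  have hclosed : IsClosed (Matrix.unitaryGroup (Fin q) ℂ : Set (Matrix (Fin q) (Fin q) ℂ)) := by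
    have : (Matrix.unitaryGroup (Fin q) ℂ : Set (Matrix (Fin q) (Fin q) ℂ)) =
        (fun U : Matrix (Fin q) (Fin q) ℂ => star U * U) ⁻¹' {1} ∩
        (fun U : Matrix (Fin q) (Fin q) ℂ => U * star U) ⁻¹' {1} := by
      ext U
      simp [Matrix.mem_unitaryGroup_iff, Unitary.mem_iff, Set.mem_inter_iff]
      try tauto
    rw [this]
    exact ((isClosed_singleton.preimage (continuous_id.star.matrix_mul continuous_id)).inter
      (isClosed_singleton.preimage (continuous_id.matrix_mul continuous_id.star)))
  exact hcomp.of_isClosed_subset hclosed hsub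

/-- The unit-normalized Haar measure on the unitary group `U(q)`:
the Haar measure normalized so that the total mass of `U(q)` is `1`. -/
noncomputable def haarU : Measure (Matrix.unitaryGroup (Fin q) ℂ) :=
  Measure.haarMeasure (⊤ : TopologicalSpace.PositiveCompacts (Matrix.unitaryGroup (Fin q) ℂ))

/-- The `t`-fold Kronecker power `(A ⊗ Ā)^{⊗ t}`, realized as a matrix whose rows and
columns are indexed by `Fin t → Fin q × Fin q`: the entry at `(i, j)` is
`∏ k, A (i k).1 (j k).1 * conj (A (i k).2 (j k).2)`. -/
noncomputable def kronPow (t : ℕ) (A : Matrix (Fin q) (Fin q) ℂ) :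
    Matrix (Fin t → Fin q × Fin q) (Fin t → Fin q × Fin q) ℂ :=
  Matrix.of fun i j => ∏ k : Fin t, (A (i k).1 (j k).1 * (starRingEnd ℂ) (A (i k).2 (j k).2))


section Aux

open scoped ComplexConjugate

instance : (haarU q).IsHaarMeasure := Measure.isHaarMeasure_haarMeasure _

instance : IsProbabilityMeasure (haarU q) := by
  constructor
  have h : (haarU q) ↑(⊤ : TopologicalSpace.PositiveCompacts (Matrix.unitaryGroup (Fin q) ℂ)) = 1 :=
    Measure.haarMeasure_self
  rwa [TopologicalSpace.PositiveCompacts.coe_top] at h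

instance : (haarU q).IsMulRightInvariant := by
  constructor
  intro g
  haveI : IsProbabilityMeasure (Measure.map (· * g) (haarU q)) :=
    Measure.isProbabilityMeasure_map (measurable_mul_const g).aemeasurable
  exact Measure.isHaarMeasure_eq_of_isProbabilityMeasure _ _

instance : (haarU q).IsInvInvariant := by
  constructor
  haveI : IsProbabilityMeasure (haarU q).inv := by
    rw [Measure.inv_def]
    exact Measure.isProbabilityMeasure_map measurable_inv.aemeasurable
  haveI : (haarU q).inv.IsHaarMeasure :=
    { toIsFiniteMeasureOnCompacts := inferInstance
      toIsMulLeftInvariant := inferInstance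
      toIsOpenPosMeasure := inferInstance }
  exact Measure.isHaarMeasure_eq_of_isProbabilityMeasure _ _

lemma kronPow_mul (t : ℕ) (A B : Matrix (Fin q) (Fin q) ℂ) :
    kronPow q t (A * B) = kronPow q t A * kronPow q t B := by
  ext i j
  have h1 : (kronPow q t A * kronPow q t B) i j
      = ∑ m : Fin t → Fin q × Fin q, ∏ k : Fin t,
          ((A (i k).1 (m k).1 * conj (A (i k).2 (m k).2)) *
           (B (m k).1 (j k).1 * conj (B (m k).2 (j k).2))) := by
    rw [Matrix.mul_apply]
    refine Finset.sum_congr rfl fun m _ => ?_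
    rw [kronPow, kronPow, Matrix.of_apply, Matrix.of_apply, ← Finset.prod_mul_distrib]
  have h2 : ∑ m : Fin t → Fin q × Fin q, ∏ k : Fin t,
          ((A (i k).1 (m k).1 * conj (A (i k).2 (m k).2)) *
           (B (m k).1 (j k).1 * conj (B (m k).2 (j k).2)))
      = ∏ k : Fin t, ∑ p : Fin q × Fin q,
          ((A (i k).1 p.1 * conj (A (i k).2 p.2)) *
           (B p.1 (j k).1 * conj (B p.2 (j k).2))) := by
    rw [Finset.prod_univ_sum]
    rw [Fintype.piFinset_univ]
  rw [h1, h2, kronPow, Matrix.of_apply]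
  refine Finset.prod_congr rfl fun k _ => ?_
  rw [Matrix.mul_apply, Matrix.mul_apply, map_sum, Finset.sum_mul_sum, Fintype.sum_prod_type]
  refine Finset.sum_congr rfl fun a _ => Finset.sum_congr rfl fun b _ => ?_
  rw [RingHom.map_mul]
  ring

lemma kronPow_conjTranspose (t : ℕ) (A : Matrix (Fin q) (Fin q) ℂ) :
    kronPow q t Aᴴ = (kronPow q t A)ᴴ := by
  ext i j
  rw [Matrix.conjTranspose_apply, kronPow, kronPow, Matrix.of_apply, Matrix.of_apply,
    RCLike.star_def, map_prod]
  refine Finset.prod_congr rfl fun k _ => ?_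
  simp only [RingHom.map_mul, Matrix.conjTranspose_apply, RCLike.star_def, Complex.conj_conj]

lemma trace_kronPow (t : ℕ) (A : Matrix (Fin q) (Fin q) ℂ) :
    (kronPow q t A).trace = ((norm A.trace ^ (2 * t) : ℝ) : ℂ) := by
  have h1 : (kronPow q t A).trace
      = ∑ m : Fin t → Fin q × Fin q, ∏ k : Fin t,
          (A (m k).1 (m k).1 * conj (A (m k).2 (m k).2)) := rfl
  rw [h1]
  have hps := Finset.prod_univ_sum (fun _ : Fin t => (Finset.univ : Finset (Fin q × Fin q)))
    (fun k (p : Fin q × Fin q) => A p.1 p.1 * conj (A p.2 p.2))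
  rw [Fintype.piFinset_univ] at hps
  rw [← hps]
  have h2 : ∀ k : Fin t, ∑ p : Fin q × Fin q, (A p.1 p.1 * conj (A p.2 p.2))
      = ((norm A.trace ^ 2 : ℝ) : ℂ) := by
    intro k
    have e1 : ∑ p : Fin q × Fin q, (A p.1 p.1 * conj (A p.2 p.2))
        = (∑ a : Fin q, A a a) * (∑ b : Fin q, conj (A b b)) := by
      rw [Finset.sum_mul_sum]
      exact Fintype.sum_prod_type _
    rw [e1, ← map_sum (starRingEnd ℂ) (fun b : Fin q => A b b) Finset.univ]
    have e2 : ∑ a : Fin q, A a a = A.trace := rfl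
    rw [e2, Complex.mul_conj, Complex.sq_norm]
  rw [Finset.prod_congr rfl fun k _ => h2 k, Finset.prod_const, Finset.card_univ,
    Fintype.card_fin, ← Complex.ofReal_pow, ← pow_mul]

lemma continuous_kronPow_entry (t : ℕ) (i j : Fin t → Fin q × Fin q) :
    Continuous (fun U : Matrix.unitaryGroup (Fin q) ℂ => kronPow q t (↑U) i j) := by
  simp only [kronPow, Matrix.of_apply]
  apply continuous_finset_prod
  intro k _
  have h1 : ∀ a b : Fin q, Continuous (fun U : Matrix.unitaryGroup (Fin q) ℂ =>
      (U : Matrix (Fin q) (Fin q) ℂ) a b) := fun a b =>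
    (continuous_apply b).comp ((continuous_apply a).comp continuous_subtype_val)
  exact (h1 _ _).mul ((h1 (i k).2 (j k).2).star)

lemma integrable_kronPow_entry (t : ℕ) (i j : Fin t → Fin q × Fin q) :
    Integrable (fun U : Matrix.unitaryGroup (Fin q) ℂ => kronPow q t (↑U) i j) (haarU q) := by
  refine (continuous_kronPow_entry q t i j).integrable_of_hasCompactSupport ?_
  exact IsCompact.of_isClosed_subset isCompact_univ (isClosed_tsupport _) (Set.subset_univ _)

/-- Haar average of the representation `kronPow`. -/
noncomputable def PH (t : ℕ) : Matrix (Fin t → Fin q × Fin q) (Fin t → Fin q × Fin q) ℂ :=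
  Matrix.of fun i j => ∫ U : Matrix.unitaryGroup (Fin q) ℂ, kronPow q t (↑U) i j ∂(haarU q)

lemma coe_unitary_mul (V U : Matrix.unitaryGroup (Fin q) ℂ) :
    ((V * U : Matrix.unitaryGroup (Fin q) ℂ) : Matrix (Fin q) (Fin q) ℂ)
      = (V : Matrix (Fin q) (Fin q) ℂ) * (U : Matrix (Fin q) (Fin q) ℂ) := rfl

lemma kron_mul_PH (t : ℕ) (V : Matrix.unitaryGroup (Fin q) ℂ) :
    kronPow q t (↑V) * PH q t = PH q t := by
  ext i j
  rw [Matrix.mul_apply]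
  calc ∑ m, kronPow q t (↑V) i m * PH q t m j
      = ∑ m, ∫ U : Matrix.unitaryGroup (Fin q) ℂ,
          kronPow q t (↑V) i m * kronPow q t (↑U) m j ∂(haarU q) := by
        exact Finset.sum_congr rfl fun m _ => (integral_const_mul _ _).symm
    _ = ∫ U : Matrix.unitaryGroup (Fin q) ℂ,
          ∑ m, kronPow q t (↑V) i m * kronPow q t (↑U) m j ∂(haarU q) :=
        (integral_finset_sum _ fun m _ => (integrable_kronPow_entry q t m j).const_mul _).symm
    _ = ∫ U : Matrix.unitaryGroup (Fin q) ℂ, kronPow q t (↑(V * U)) i j ∂(haarU q) := by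
        refine integral_congr_ae (Filter.Eventually.of_forall fun U => ?_)
        show ∑ m, kronPow q t (↑V) i m * kronPow q t (↑U) m j = kronPow q t (↑(V * U)) i j
        rw [coe_unitary_mul, kronPow_mul, Matrix.mul_apply]
    _ = ∫ U : Matrix.unitaryGroup (Fin q) ℂ, kronPow q t (↑U) i j ∂(haarU q) :=
        integral_mul_left_eq_self (fun U : Matrix.unitaryGroup (Fin q) ℂ =>
          kronPow q t (↑U) i j) V
    _ = PH q t i j := rfl

lemma PH_mul_kron (t : ℕ) (V : Matrix.unitaryGroup (Fin q) ℂ) :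
    PH q t * kronPow q t (↑V) = PH q t := by
  ext i j
  rw [Matrix.mul_apply]
  calc ∑ m, PH q t i m * kronPow q t (↑V) m j
      = ∑ m, ∫ U : Matrix.unitaryGroup (Fin q) ℂ,
          kronPow q t (↑U) i m * kronPow q t (↑V) m j ∂(haarU q) := by
        exact Finset.sum_congr rfl fun m _ => (integral_mul_const _ _).symm
    _ = ∫ U : Matrix.unitaryGroup (Fin q) ℂ,
          ∑ m, kronPow q t (↑U) i m * kronPow q t (↑V) m j ∂(haarU q) :=
        (integral_finset_sum _ fun m _ => (integrable_kronPow_entry q t i m).mul_const _).symm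
    _ = ∫ U : Matrix.unitaryGroup (Fin q) ℂ, kronPow q t (↑(U * V)) i j ∂(haarU q) := by
        refine integral_congr_ae (Filter.Eventually.of_forall fun U => ?_)
        show ∑ m, kronPow q t (↑U) i m * kronPow q t (↑V) m j = kronPow q t (↑(U * V)) i j
        rw [coe_unitary_mul, kronPow_mul, Matrix.mul_apply]
    _ = ∫ U : Matrix.unitaryGroup (Fin q) ℂ, kronPow q t (↑U) i j ∂(haarU q) :=
        integral_mul_right_eq_self (fun U : Matrix.unitaryGroup (Fin q) ℂ =>
          kronPow q t (↑U) i j) V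
    _ = PH q t i j := rfl

lemma PH_idem (t : ℕ) : PH q t * PH q t = PH q t := by
  ext i j
  rw [Matrix.mul_apply]
  calc ∑ m, PH q t i m * PH q t m j
      = ∑ m, ∫ V : Matrix.unitaryGroup (Fin q) ℂ,
          kronPow q t (↑V) i m * PH q t m j ∂(haarU q) := by
        exact Finset.sum_congr rfl fun m _ => (integral_mul_const _ _).symm
    _ = ∫ V : Matrix.unitaryGroup (Fin q) ℂ,
          ∑ m, kronPow q t (↑V) i m * PH q t m j ∂(haarU q) :=
        (integral_finset_sum _ fun m _ => (integrable_kronPow_entry q t i m).mul_const _).symm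
    _ = ∫ _V : Matrix.unitaryGroup (Fin q) ℂ, PH q t i j ∂(haarU q) := by
        refine integral_congr_ae (Filter.Eventually.of_forall fun V => ?_)
        have := kron_mul_PH q t V
        calc ∑ m, kronPow q t (↑V) i m * PH q t m j
            = (kronPow q t (↑V) * PH q t) i j := (Matrix.mul_apply).symm
          _ = PH q t i j := by rw [this]
    _ = PH q t i j := by simp

lemma PH_star (t : ℕ) : (PH q t)ᴴ = PH q t := by
  ext i j
  rw [Matrix.conjTranspose_apply]
  have h1 : star (PH q t j i)
      = ∫ U : Matrix.unitaryGroup (Fin q) ℂ, conj (kronPow q t (↑U) j i) ∂(haarU q) := by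
    rw [show PH q t j i = ∫ U : Matrix.unitaryGroup (Fin q) ℂ,
      kronPow q t (↑U) j i ∂(haarU q) from rfl, RCLike.star_def, ← integral_conj]
  rw [h1]
  have h2 : ∀ U : Matrix.unitaryGroup (Fin q) ℂ,
      conj (kronPow q t (↑U) j i) = kronPow q t (↑(U⁻¹)) i j := by
    intro U
    have hc : ((U⁻¹ : Matrix.unitaryGroup (Fin q) ℂ) : Matrix (Fin q) (Fin q) ℂ)
        = ((U : Matrix (Fin q) (Fin q) ℂ))ᴴ := by
      rw [← Unitary.star_eq_inv, Unitary.coe_star, Matrix.star_eq_conjTranspose]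
    rw [hc, kronPow_conjTranspose, Matrix.conjTranspose_apply, RCLike.star_def]
  calc ∫ U : Matrix.unitaryGroup (Fin q) ℂ, conj (kronPow q t (↑U) j i) ∂(haarU q)
      = ∫ U : Matrix.unitaryGroup (Fin q) ℂ, kronPow q t (↑(U⁻¹)) i j ∂(haarU q) :=
        integral_congr_ae (Filter.Eventually.of_forall fun U => h2 U)
    _ = ∫ U : Matrix.unitaryGroup (Fin q) ℂ, kronPow q t (↑U) i j ∂(haarU q) :=
        integral_inv_eq_self (fun U : Matrix.unitaryGroup (Fin q) ℂ =>
          kronPow q t (↑U) i j) (haarU q)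
    _ = PH q t i j := rfl

lemma PH_trace (t : ℕ) : (PH q t).trace
    = ((∫ U : Matrix.unitaryGroup (Fin q) ℂ,
        norm (Matrix.trace ((U : Matrix (Fin q) (Fin q) ℂ))) ^ (2 * t) ∂(haarU q) : ℝ) : ℂ) := by
  have h1 : (PH q t).trace = ∑ m : Fin t → Fin q × Fin q,
      ∫ U : Matrix.unitaryGroup (Fin q) ℂ, kronPow q t (↑U) m m ∂(haarU q) := rfl
  rw [h1, ← integral_finset_sum _ fun m _ => integrable_kronPow_entry q t m m]
  calc ∫ U : Matrix.unitaryGroup (Fin q) ℂ,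
        (∑ m : Fin t → Fin q × Fin q, kronPow q t (↑U) m m) ∂(haarU q)
      = ∫ U : Matrix.unitaryGroup (Fin q) ℂ,
          ((norm (Matrix.trace ((U : Matrix (Fin q) (Fin q) ℂ))) ^ (2 * t) : ℝ) : ℂ)
          ∂(haarU q) := by
        refine integral_congr_ae (Filter.Eventually.of_forall fun U => ?_)
        exact trace_kronPow q t _
    _ = _ := integral_ofReal

/-- Group average of the representation `kronPow` over a finite subgroup. -/
noncomputable def PG (t : ℕ) (G : Subgroup (Matrix.unitaryGroup (Fin q) ℂ)) [Fintype G] :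
    Matrix (Fin t → Fin q × Fin q) (Fin t → Fin q × Fin q) ℂ :=
  (Fintype.card G : ℂ)⁻¹ • ∑ g : G,
    kronPow q t (((g : Matrix.unitaryGroup (Fin q) ℂ) : Matrix (Fin q) (Fin q) ℂ))

variable (t : ℕ) (G : Subgroup (Matrix.unitaryGroup (Fin q) ℂ)) [Fintype G]

lemma card_ne_zero' : (Fintype.card G : ℂ) ≠ 0 := by
  exact_mod_cast Nat.cast_ne_zero.mpr Fintype.card_ne_zero

lemma kron_mul_sum (g : G) : kronPow q t ((g : Matrix.unitaryGroup (Fin q) ℂ) : Matrix (Fin q) (Fin q) ℂ) *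
      (∑ h : G, kronPow q t ((h : Matrix.unitaryGroup (Fin q) ℂ) : Matrix (Fin q) (Fin q) ℂ))
      = ∑ h : G, kronPow q t ((h : Matrix.unitaryGroup (Fin q) ℂ) : Matrix (Fin q) (Fin q) ℂ) := by
  rw [Finset.mul_sum]
  rw [← Equiv.sum_comp (Equiv.mulLeft g) (fun h : G =>
    kronPow q t ((h : Matrix.unitaryGroup (Fin q) ℂ) : Matrix (Fin q) (Fin q) ℂ))]
  refine Finset.sum_congr rfl fun h _ => ?_
  rw [← kronPow_mul]
  rfl

lemma PG_idem : PG q t G * PG q t G = PG q t G := by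
  rw [PG, Matrix.smul_mul, Matrix.mul_smul, Finset.sum_mul]
  rw [Finset.sum_congr rfl fun g _ => kron_mul_sum q t G g]
  rw [Finset.sum_const, Finset.card_univ, smul_smul, ← Nat.cast_smul_eq_nsmul ℂ, smul_smul]
  congr 1
  rw [mul_assoc, inv_mul_cancel₀ (card_ne_zero' q G), mul_one]

lemma PG_star : (PG q t G)ᴴ = PG q t G := by
  rw [PG, Matrix.conjTranspose_smul, Matrix.conjTranspose_sum]
  have h : ∀ g : G, (kronPow q t ((g : Matrix.unitaryGroup (Fin q) ℂ) : Matrix (Fin q) (Fin q) ℂ))ᴴ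
      = kronPow q t (((g⁻¹ : G) : Matrix.unitaryGroup (Fin q) ℂ) : Matrix (Fin q) (Fin q) ℂ) := by
    intro g
    have hc : (((g⁻¹ : G) : Matrix.unitaryGroup (Fin q) ℂ) : Matrix (Fin q) (Fin q) ℂ)
        = (((g : Matrix.unitaryGroup (Fin q) ℂ) : Matrix (Fin q) (Fin q) ℂ))ᴴ := by
      rw [← Matrix.star_eq_conjTranspose, ← Unitary.coe_star, Unitary.star_eq_inv]
      rfl
    rw [hc, kronPow_conjTranspose]
  rw [Finset.sum_congr rfl fun g _ => h g]
  have e := Equiv.sum_comp (Equiv.inv G) (fun h : G =>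
    kronPow q t ((h : Matrix.unitaryGroup (Fin q) ℂ) : Matrix (Fin q) (Fin q) ℂ))
  simp only [Equiv.inv_apply] at e
  rw [e, star_inv₀, star_natCast]

lemma PG_mul_PH : PG q t G * PH q t = PH q t := by
  rw [PG, Matrix.smul_mul, Finset.sum_mul]
  rw [Finset.sum_congr rfl fun g _ => kron_mul_PH q t ((g : G) : Matrix.unitaryGroup (Fin q) ℂ)]
  rw [Finset.sum_const, Finset.card_univ, ← Nat.cast_smul_eq_nsmul ℂ, smul_smul,
    inv_mul_cancel₀ (card_ne_zero' q G), one_smul]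

lemma PH_mul_PG : PH q t * PG q t G = PH q t := by
  rw [PG, Matrix.mul_smul, Finset.mul_sum]
  rw [Finset.sum_congr rfl fun g _ => PH_mul_kron q t ((g : G) : Matrix.unitaryGroup (Fin q) ℂ)]
  rw [Finset.sum_const, Finset.card_univ, ← Nat.cast_smul_eq_nsmul ℂ, smul_smul,
    inv_mul_cancel₀ (card_ne_zero' q G), one_smul]

lemma PG_trace : (PG q t G).trace
    = (((Fintype.card G : ℝ)⁻¹ * ∑ g : G, norm
        (Matrix.trace ((g : Matrix.unitaryGroup (Fin q) ℂ) : Matrix (Fin q) (Fin q) ℂ)) ^ (2 * t) : ℝ) : ℂ) := by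
  rw [PG, Matrix.trace_smul, Matrix.trace_sum]
  rw [Finset.sum_congr rfl fun g _ => trace_kronPow q t _]
  push_cast
  rw [smul_eq_mul]

end Aux

/-- For `q ≥ 1`, `t ≥ 1` and any finite subgroup `G` of the unitary group `U(q)`,
`(1/|G|) · Σ_{g ∈ G} |tr g|^{2t} ≥ ∫_{U(q)} |tr U|^{2t} dU`, the integral taken with respect
to the unit-normalized Haar measure on `U(q)`. -/
theorem trace_moment_average_ge_haar (t : ℕ) (hq : 1 ≤ q) (ht : 1 ≤ t)
    (G : Subgroup (Matrix.unitaryGroup (Fin q) ℂ)) [Fintype G] :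
    (Fintype.card G : ℝ)⁻¹ *
        ∑ g : G, norm
          (Matrix.trace ((g : Matrix.unitaryGroup (Fin q) ℂ) : Matrix (Fin q) (Fin q) ℂ)) ^ (2 * t)
      ≥ ∫ U : Matrix.unitaryGroup (Fin q) ℂ,
          norm (Matrix.trace ((U : Matrix (Fin q) (Fin q) ℂ))) ^ (2 * t) ∂(haarU q) := by
  set L : ℝ := (Fintype.card G : ℝ)⁻¹ *
      ∑ g : G, norm
        (Matrix.trace ((g : Matrix.unitaryGroup (Fin q) ℂ) : Matrix (Fin q) (Fin q) ℂ)) ^ (2 * t)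
    with hL
  set R : ℝ := ∫ U : Matrix.unitaryGroup (Fin q) ℂ,
      norm (Matrix.trace ((U : Matrix (Fin q) (Fin q) ℂ))) ^ (2 * t) ∂(haarU q) with hR
  set D := PG q t G - PH q t with hD
  have hD2 : D * D = D := by
    rw [hD, sub_mul, mul_sub, mul_sub, PG_idem, PG_mul_PH, PH_mul_PG, PH_idem, sub_self, sub_zero]
  have hDs : Dᴴ = D := by
    rw [hD, Matrix.conjTranspose_sub, PG_star, PH_star]
  have htrD : D.trace = (Dᴴ * D).trace := by rw [hDs, hD2]
  have hnonneg : ∃ s : ℝ, 0 ≤ s ∧ (Dᴴ * D).trace = (s : ℂ) := by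
    refine ⟨∑ j : Fin t → Fin q × Fin q, ∑ i : Fin t → Fin q × Fin q,
      Complex.normSq (D i j), ?_, ?_⟩
    · exact Finset.sum_nonneg fun j _ => Finset.sum_nonneg fun i _ => Complex.normSq_nonneg _
    · rw [Matrix.trace]
      push_cast
      refine Finset.sum_congr rfl fun j _ => ?_
      rw [Matrix.diag_apply, Matrix.mul_apply]
      refine Finset.sum_congr rfl fun i _ => ?_
      rw [Matrix.conjTranspose_apply, RCLike.star_def, mul_comm, Complex.mul_conj]
  obtain ⟨s, hs0, hs⟩ := hnonneg
  have htr : D.trace = ((L - R : ℝ) : ℂ) := by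
    rw [hD, Matrix.trace_sub, PG_trace, PH_trace, ← hL, ← hR]
    push_cast
    ring
  have : (L - R : ℝ) = s := by
    have := htr.symm.trans (htrD.trans hs)
    exact_mod_cast this
  linarith
end

section
/- For every q ≥ 2, the fourth absolute moment of the trace over the unitary group satisfies ∫_{U(q)} |tr(U)|^4 dU = 2, where the integral is with respect to the unit-normalized Haar measure. -/
open MeasureTheory Matrix

variable (q : ℕ)

open Kronecker

namespace FM
variable {q : ℕ}
abbrev Idx (q : ℕ) := (Fin q × Fin q) × (Fin q × Fin q)
noncomputable def K2 (A : Matrix (Fin q) (Fin q) ℂ) : Matrix (Idx q) (Idx q) ℂ :=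
  (A ⊗ₖ A.map (starRingEnd ℂ)) ⊗ₖ (A ⊗ₖ A.map (starRingEnd ℂ))
lemma K2_apply (A : Matrix (Fin q) (Fin q) ℂ) (i j : Idx q) :
    K2 A i j = A i.1.1 j.1.1 * (starRingEnd ℂ) (A i.1.2 j.1.2) *
      (A i.2.1 j.2.1 * (starRingEnd ℂ) (A i.2.2 j.2.2)) := rfl
lemma K2_mul (A B : Matrix (Fin q) (Fin q) ℂ) : K2 (A * B) = K2 A * K2 B := by
  simp only [K2, Matrix.map_mul, Matrix.mul_kronecker_mul]

lemma trace_map_conj (A : Matrix (Fin q) (Fin q) ℂ) :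
    (A.map (starRingEnd ℂ)).trace = (starRingEnd ℂ) A.trace := by
  simp [Matrix.trace, Matrix.map_apply, map_sum, Matrix.diag]

lemma trace_K2 (A : Matrix (Fin q) (Fin q) ℂ) :
    (K2 A).trace = ((‖A.trace‖ : ℝ) : ℂ) ^ 4 := by
  rw [K2, Matrix.trace_kronecker, Matrix.trace_kronecker, trace_map_conj]
  rw [Complex.mul_conj]
  rw [Complex.normSq_eq_norm_sq, ← Complex.ofReal_pow, ← Complex.ofReal_mul, Complex.ofReal_inj]
  ring

def FixedVec (v : Idx q → ℂ) : Prop :=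
  ∀ U ∈ Matrix.unitaryGroup (Fin q) ℂ, K2 U *ᵥ v = v

def w (q : ℕ) : Fin q × Fin q → ℂ := fun r => if r.1 = r.2 then 1 else 0
def v1 (q : ℕ) : Idx q → ℂ := fun i => if i.1.1 = i.1.2 ∧ i.2.1 = i.2.2 then 1 else 0
def v2 (q : ℕ) : Idx q → ℂ := fun i => if i.1.1 = i.2.2 ∧ i.2.1 = i.1.2 then 1 else 0

def τ (q : ℕ) : Idx q ≃ Idx q where
  toFun i := ((i.1.1, i.2.2), (i.2.1, i.1.2))
  invFun i := ((i.1.1, i.2.2), (i.2.1, i.1.2))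
  left_inv i := rfl
  right_inv i := rfl

lemma v2_eq (i : Idx q) : v2 q i = v1 q (τ q i) := rfl

lemma K2_tau (A : Matrix (Fin q) (Fin q) ℂ) (i j : Idx q) :
    K2 A (τ q i) j = K2 A i (τ q j) := by
  simp only [K2_apply, τ, Equiv.coe_fn_mk]
  ring

lemma rows_orthonormal {U : Matrix (Fin q) (Fin q) ℂ} (hU : U ∈ Matrix.unitaryGroup (Fin q) ℂ)
    (a b : Fin q) : ∑ c, U a c * (starRingEnd ℂ) (U b c) = if a = b then 1 else 0 := by
  have hUU : U * Uᴴ = 1 := by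
    rw [← Matrix.star_eq_conjTranspose]
    exact hU.2
  have := congrFun (congrFun hUU a) b
  simpa [Matrix.mul_apply, Matrix.conjTranspose_apply, Matrix.one_apply] using this

lemma kron_mulVec {m n : Type*} [Fintype m] [Fintype n] (A : Matrix m m ℂ) (B : Matrix n n ℂ)
    (f : m → ℂ) (g : n → ℂ) :
    ((A ⊗ₖ B) *ᵥ fun p => f p.1 * g p.2) = fun p => (A *ᵥ f) p.1 * (B *ᵥ g) p.2 := by
  funext p
  simp only [Matrix.mulVec, dotProduct, Matrix.kroneckerMap_apply, Fintype.sum_prod_type]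
  rw [Finset.sum_mul_sum]
  exact Finset.sum_congr rfl fun _ _ => Finset.sum_congr rfl fun _ _ => by ring

lemma UUbar_mulVec_w {U : Matrix (Fin q) (Fin q) ℂ} (hU : U ∈ Matrix.unitaryGroup (Fin q) ℂ) :
    (U ⊗ₖ U.map (starRingEnd ℂ)) *ᵥ w q = w q := by
  funext p
  simp only [Matrix.mulVec, dotProduct, Matrix.kroneckerMap_apply, Fintype.sum_prod_type,
    w, Matrix.map_apply, mul_ite, mul_one, mul_zero]
  simp only [Finset.sum_ite_eq, Finset.mem_univ, if_true]
  exact rows_orthonormal hU p.1 p.2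

lemma v1_eq_prod : v1 q = fun i : Idx q => w q i.1 * w q i.2 := by
  funext i
  by_cases h1 : i.1.1 = i.1.2 <;> by_cases h2 : i.2.1 = i.2.2 <;> simp [v1, w, h1, h2]

lemma K2_mulVec_v1 {U : Matrix (Fin q) (Fin q) ℂ} (hU : U ∈ Matrix.unitaryGroup (Fin q) ℂ) :
    K2 U *ᵥ v1 q = v1 q := by
  rw [v1_eq_prod, K2, kron_mulVec, UUbar_mulVec_w hU]

lemma K2_mulVec_v2 {U : Matrix (Fin q) (Fin q) ℂ} (hU : U ∈ Matrix.unitaryGroup (Fin q) ℂ) :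
    K2 U *ᵥ v2 q = v2 q := by
  funext i
  have h1 := congrFun (K2_mulVec_v1 hU) (τ q i)
  calc (K2 U *ᵥ v2 q) i = ∑ j, K2 U i j * v1 q (τ q j) := by
        simp [Matrix.mulVec, dotProduct, v2_eq]
    _ = ∑ j, K2 U (τ q i) j * v1 q j := by
        rw [← Equiv.sum_comp (τ q) (fun j => K2 U i j * v1 q ((τ q) j))]
        exact Finset.sum_congr rfl fun j _ => by rw [← K2_tau]; rfl
    _ = v2 q i := by
        rw [v2_eq, ← h1]
        simp [Matrix.mulVec, dotProduct]

variable {v : Idx q → ℂ}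

-- diagonal unitaries
lemma diagonal_mem_unitary (d : Fin q → ℂ) (hd : ∀ t, d t * (starRingEnd ℂ) (d t) = 1) :
    Matrix.diagonal d ∈ Matrix.unitaryGroup (Fin q) ℂ := by
  rw [Matrix.mem_unitaryGroup_iff, Matrix.star_eq_conjTranspose, Matrix.diagonal_conjTranspose,
    Matrix.diagonal_mul_diagonal]
  funext a b
  by_cases h : a = b <;> simp [Matrix.diagonal_apply, Matrix.one_apply, h, hd]

lemma diag_eq {v : Idx q → ℂ} (hv : FixedVec v) (d : Fin q → ℂ)
    (hd : ∀ t, d t * (starRingEnd ℂ) (d t) = 1) (i : Idx q) :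
    d i.1.1 * (starRingEnd ℂ) (d i.1.2) * (d i.2.1 * (starRingEnd ℂ) (d i.2.2)) * v i = v i := by
  have h := congrFun (hv (Matrix.diagonal d) (diagonal_mem_unitary d hd)) i
  simp only [Matrix.mulVec, dotProduct, K2_apply, Matrix.diagonal_apply,
    Fintype.sum_prod_type, apply_ite (starRingEnd ℂ), map_zero, ite_mul, zero_mul, mul_ite,
    mul_zero, Finset.sum_ite_eq, Finset.mem_univ, if_true] at h
  exact h

-- permutation unitaries
def permMat (σ : Equiv.Perm (Fin q)) : Matrix (Fin q) (Fin q) ℂ :=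
  Matrix.of fun a b => if a = σ b then 1 else 0

lemma permMat_mem (σ : Equiv.Perm (Fin q)) : permMat σ ∈ Matrix.unitaryGroup (Fin q) ℂ := by
  rw [Matrix.mem_unitaryGroup_iff]
  funext a b
  simp only [Matrix.mul_apply, Matrix.star_apply, Matrix.star_eq_conjTranspose,
    Matrix.conjTranspose_apply, permMat, Matrix.of_apply, apply_ite (star : ℂ → ℂ),
    star_one, star_zero]
  rw [← Equiv.sum_comp σ.symm (fun c => (if a = σ c then (1:ℂ) else 0) * if b = σ c then 1 else 0)]
  simp only [Equiv.apply_symm_apply, ite_mul, one_mul, zero_mul, Finset.sum_ite_eq,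
    Finset.mem_univ, if_true, Matrix.one_apply]
  by_cases h : a = b <;> simp [h, eq_comm]

lemma perm_eq {v : Idx q → ℂ} (hv : FixedVec v) (σ : Equiv.Perm (Fin q)) (i : Idx q) :
    v ((σ i.1.1, σ i.1.2), (σ i.2.1, σ i.2.2)) = v i := by
  have h := congrFun (hv (permMat σ) (permMat_mem σ)) ((σ i.1.1, σ i.1.2), (σ i.2.1, σ i.2.2))
  simp only [Matrix.mulVec, dotProduct, K2_apply, permMat, Matrix.of_apply,
    Fintype.sum_prod_type, apply_ite (starRingEnd ℂ), _root_.map_one, _root_.map_zero,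
    EmbeddingLike.apply_eq_iff_eq, ite_mul, one_mul, zero_mul, mul_ite, mul_one, mul_zero,
    Finset.sum_ite_eq, Finset.mem_univ, if_true] at h
  exact h.symm


lemma support_lemma (hv : FixedVec v) (i : Idx q)
    (h : ¬ ((i.1.2 = i.1.1 ∧ i.2.2 = i.2.1) ∨ (i.1.2 = i.2.1 ∧ i.2.2 = i.1.1))) : v i = 0 := by
  obtain ⟨⟨a1, b1⟩, a2, b2⟩ := i
  simp only at h
  by_contra hvi
  have hph : ∀ t : Fin q,
      (if a1 = t then Complex.I else 1) * (starRingEnd ℂ) (if b1 = t then Complex.I else 1) *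
      ((if a2 = t then Complex.I else 1) * (starRingEnd ℂ) (if b2 = t then Complex.I else 1))
        = 1 := by
    intro t
    have hd : ∀ s : Fin q, (if s = t then Complex.I else 1) *
        (starRingEnd ℂ) (if s = t then Complex.I else 1) = 1 := by
      intro s
      by_cases hs : s = t <;> simp [hs, Complex.conj_I, Complex.I_mul_I]
    have hde := diag_eq hv (fun s => if s = t then Complex.I else 1) hd ((a1, b1), (a2, b2))
    simp only at hde
    have := mul_right_cancel₀ hvi (hde.trans (one_mul (v ((a1,b1),(a2,b2)))).symm)
    simpa [eq_comm] using this
  have hcnt : ∀ t : Fin q, ((if a1 = t then 1 else 0) + (if a2 = t then 1 else 0) : ℕ)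
      = (if b1 = t then 1 else 0) + (if b2 = t then 1 else 0) := by
    intro t
    have hp := hph t
    by_cases e1 : a1 = t <;> by_cases e2 : a2 = t <;> by_cases e3 : b1 = t <;>
      by_cases e4 : b2 = t <;>
      simp only [e1, e2, e3, e4, if_true, if_false, Complex.conj_I, _root_.map_one] at hp ⊢ <;>
      first
        | rfl
        | (exfalso; norm_num [Complex.ext_iff] at hp)
  have c1 := hcnt a1
  have c2 := hcnt a2
  apply h
  by_cases h1 : b1 = a1 <;> by_cases h2 : b2 = a2 <;> by_cases h3 : b1 = a2 <;>
    by_cases h4 : b2 = a1 <;> by_cases h5 : a1 = a2 <;> simp_all <;> omega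


def z0 (hq : 2 ≤ q) : Fin q := ⟨0, by omega⟩
def z1 (hq : 2 ≤ q) : Fin q := ⟨1, by omega⟩

lemma z0_ne_z1 (hq : 2 ≤ q) : z0 hq ≠ z1 hq := by simp [z0, z1, Fin.ext_iff]

noncomputable def cc : ℂ := ((Real.sqrt 2)⁻¹ : ℝ)

lemma conj_cc : (starRingEnd ℂ) cc = cc := Complex.conj_ofReal _
lemma cc_mul_cc : cc * cc = 1/2 := by
  rw [cc, Complex.ofReal_inv, ← mul_inv, ← Complex.ofReal_mul,
    Real.mul_self_sqrt (le_of_lt two_pos)]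
  norm_num

noncomputable def rot (hq : 2 ≤ q) : Matrix (Fin q) (Fin q) ℂ :=
  Matrix.of fun a b =>
    if a = z0 hq then (if b = z0 hq then cc else if b = z1 hq then cc else 0)
    else if a = z1 hq then (if b = z0 hq then -cc else if b = z1 hq then cc else 0)
    else if a = b then 1 else 0

lemma conj_rot (hq : 2 ≤ q) (a b : Fin q) :
    (starRingEnd ℂ) (rot hq a b) = rot hq a b := by
  simp only [rot, Matrix.of_apply]
  split_ifs <;> simp [conj_cc]

lemma sum_two (hq : 2 ≤ q) (f : Fin q → ℂ) (hf : ∀ t, t ≠ z0 hq → t ≠ z1 hq → f t = 0) :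
    ∑ t, f t = f (z0 hq) + f (z1 hq) := by
  rw [← Finset.sum_subset (Finset.subset_univ {z0 hq, z1 hq})]
  · rw [Finset.sum_insert (by simp [z0_ne_z1 hq]), Finset.sum_singleton]
  · intro t _ ht
    simp only [Finset.mem_insert, Finset.mem_singleton, not_or] at ht
    exact hf t ht.1 ht.2

lemma rot_mem (hq : 2 ≤ q) : rot hq ∈ Matrix.unitaryGroup (Fin q) ℂ := by
  rw [Matrix.mem_unitaryGroup_iff]
  funext a b
  have key : (rot hq * star (rot hq)) a b = ∑ t, rot hq a t * rot hq b t := by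
    simp [Matrix.mul_apply, Matrix.star_eq_conjTranspose, Matrix.conjTranspose_apply,
      Matrix.star_apply, conj_rot hq]
  rw [key]
  have hne := z0_ne_z1 hq
  have r0 : ∀ t, rot hq (z0 hq) t = if t = z0 hq then cc else if t = z1 hq then cc else 0 := by
    intro t; simp [rot]
  have r1 : ∀ t, rot hq (z1 hq) t = if t = z0 hq then -cc else if t = z1 hq then cc else 0 := by
    intro t; simp [rot, hne.symm]
  have ro : ∀ x t, x ≠ z0 hq → x ≠ z1 hq → rot hq x t = if x = t then 1 else 0 := by
    intro x t h0 h1; simp [rot, h0, h1]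
  by_cases ha0 : a = z0 hq <;> by_cases ha1 : a = z1 hq <;>
    by_cases hb0 : b = z0 hq <;> by_cases hb1 : b = z1 hq
  all_goals (try (exact absurd (ha0.symm.trans ha1) hne))
  all_goals (try (exact absurd (hb0.symm.trans hb1) hne))
  -- a = z0, b = z0
  · subst ha0 hb0
    rw [sum_two hq _ (fun t h0 h1 => by simp [r0, h0, h1])]
    simp [r0, hne.symm, Matrix.one_apply, cc_mul_cc]
    try norm_num
  -- a = z0, b = z1
  · subst ha0 hb1
    rw [sum_two hq _ (fun t h0 h1 => by simp [r0, h0, h1])]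
    simp [r0, r1, hne.symm, Matrix.one_apply, hne]
    try ring
  -- a = z0, b other
  · subst ha0
    rw [sum_two hq _ (fun t h0 h1 => by simp [r0, h0, h1])]
    simp [r0, ro b _ hb0 hb1, hne.symm, Matrix.one_apply, hb0, hb1, Ne.symm hb0]
  -- a = z1, b = z0
  · subst ha1 hb0
    rw [sum_two hq _ (fun t h0 h1 => by simp [r1, h0, h1])]
    simp [r0, r1, hne.symm, Matrix.one_apply, hne]
    try ring
  -- a = z1, b = z1
  · subst ha1 hb1
    rw [sum_two hq _ (fun t h0 h1 => by simp [r1, h0, h1])]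
    simp [r1, hne.symm, Matrix.one_apply, cc_mul_cc]
    try ring_nf
  -- a = z1, b other
  · subst ha1
    rw [sum_two hq _ (fun t h0 h1 => by simp [r1, h0, h1])]
    simp [r1, ro b _ hb0 hb1, hne.symm, Matrix.one_apply, hb0, hb1, Ne.symm hb0, Ne.symm hb1]
  -- a other, b = z0
  · subst hb0
    have : ∀ t, rot hq a t * rot hq (z0 hq) t = if a = t then rot hq (z0 hq) t else 0 := by
      intro t; rw [ro a t ha0 ha1]; split_ifs <;> simp
    simp only [this, Finset.sum_ite_eq, Finset.mem_univ, if_true]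
    simp [r0, ha0, ha1, Matrix.one_apply]
  -- a other, b = z1
  · subst hb1
    have : ∀ t, rot hq a t * rot hq (z1 hq) t = if a = t then rot hq (z1 hq) t else 0 := by
      intro t; rw [ro a t ha0 ha1]; split_ifs <;> simp
    simp only [this, Finset.sum_ite_eq, Finset.mem_univ, if_true]
    simp [r1, ha0, ha1, Matrix.one_apply]
  -- a other, b other
  · have : ∀ t, rot hq a t * rot hq b t = if a = t then rot hq b t else 0 := by
      intro t; rw [ro a t ha0 ha1]; split_ifs <;> simp
    simp only [this, Finset.sum_ite_eq, Finset.mem_univ, if_true]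
    simp [ro b a hb0 hb1, Matrix.one_apply, eq_comm]


lemma rot_eq (hq : 2 ≤ q) (hv : FixedVec v) :
    v ((z0 hq, z0 hq), (z0 hq, z0 hq)) + v ((z1 hq, z1 hq), (z1 hq, z1 hq))
      + v ((z0 hq, z0 hq), (z1 hq, z1 hq)) + v ((z1 hq, z1 hq), (z0 hq, z0 hq))
      + v ((z0 hq, z1 hq), (z1 hq, z0 hq)) + v ((z1 hq, z0 hq), (z0 hq, z1 hq))
      = 4 * v ((z0 hq, z0 hq), (z0 hq, z0 hq)) := by
  have hne := z0_ne_z1 hq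
  have r0 : ∀ t, rot hq (z0 hq) t = if t = z0 hq then cc else if t = z1 hq then cc else 0 :=
    fun t => by simp [rot]
  set s2 : Finset (Fin q) := {z0 hq, z1 hq} with hs2
  have hvan : ∀ j ∈ (Finset.univ : Finset (Idx q)),
      j ∉ ((s2 ×ˢ s2) ×ˢ (s2 ×ˢ s2)) →
        K2 (rot hq) ((z0 hq, z0 hq), (z0 hq, z0 hq)) j * v j = 0 := by
    intro j _ hj
    obtain ⟨⟨c1, d1⟩, c2, d2⟩ := j
    simp only [Finset.mem_product, Finset.mem_insert, Finset.mem_singleton, not_and_or, not_or,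
      s2] at hj
    rcases hj with ((⟨h1, h2⟩ | ⟨h1, h2⟩) | (⟨h1, h2⟩ | ⟨h1, h2⟩)) <;> simp [K2_apply, r0, h1, h2]
  have hss := Finset.sum_subset (Finset.subset_univ ((s2 ×ˢ s2) ×ˢ (s2 ×ˢ s2))) hvan
  have h := congrFun (hv (rot hq) (rot_mem hq)) ((z0 hq, z0 hq), (z0 hq, z0 hq))
  have hlhs : (K2 (rot hq) *ᵥ v) ((z0 hq, z0 hq), (z0 hq, z0 hq))
      = ∑ j : Idx q, K2 (rot hq) ((z0 hq, z0 hq), (z0 hq, z0 hq)) j * v j := rfl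
  rw [hlhs, ← hss] at h
  simp only [s2, Finset.sum_product, Finset.sum_pair hne] at h
  simp only [K2_apply, r0, if_true, if_false, hne, hne.symm, ite_true, ite_false, eq_self_iff_true,
    if_neg hne.symm, if_neg hne, conj_cc] at h
  have bad0 : v ((z0 hq, z0 hq), (z0 hq, z1 hq)) = 0 := support_lemma hv _ (by simp [hne, hne.symm])
  have bad1 : v ((z0 hq, z0 hq), (z1 hq, z0 hq)) = 0 := support_lemma hv _ (by simp [hne, hne.symm])
  have bad2 : v ((z0 hq, z1 hq), (z0 hq, z0 hq)) = 0 := support_lemma hv _ (by simp [hne, hne.symm])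
  have bad3 : v ((z0 hq, z1 hq), (z0 hq, z1 hq)) = 0 := support_lemma hv _ (by simp [hne, hne.symm])
  have bad4 : v ((z0 hq, z1 hq), (z1 hq, z1 hq)) = 0 := support_lemma hv _ (by simp [hne, hne.symm])
  have bad5 : v ((z1 hq, z0 hq), (z0 hq, z0 hq)) = 0 := support_lemma hv _ (by simp [hne, hne.symm])
  have bad6 : v ((z1 hq, z0 hq), (z1 hq, z0 hq)) = 0 := support_lemma hv _ (by simp [hne, hne.symm])
  have bad7 : v ((z1 hq, z0 hq), (z1 hq, z1 hq)) = 0 := support_lemma hv _ (by simp [hne, hne.symm])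
  have bad8 : v ((z1 hq, z1 hq), (z0 hq, z1 hq)) = 0 := support_lemma hv _ (by simp [hne, hne.symm])
  have bad9 : v ((z1 hq, z1 hq), (z1 hq, z0 hq)) = 0 := support_lemma hv _ (by simp [hne, hne.symm])
  rw [bad0] at h
  rw [bad1] at h
  rw [bad2] at h
  rw [bad3] at h
  rw [bad4] at h
  rw [bad5] at h
  rw [bad6] at h
  rw [bad7] at h
  rw [bad8] at h
  rw [bad9] at h
  have h4 : cc * cc * (cc * cc) = 1/4 := by rw [cc_mul_cc]; norm_num
  rw [h4] at h
  linear_combination 4 * h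

lemma exists_perm (hq : 2 ≤ q) {a b : Fin q} (hab : a ≠ b) :
    ∃ σ : Equiv.Perm (Fin q), σ (z0 hq) = a ∧ σ (z1 hq) = b := by
  classical
  set σ1 := Equiv.swap (z0 hq) a with hσ1
  have h1 : σ1 (z0 hq) = a := Equiv.swap_apply_left _ _
  have hb' : σ1 (z1 hq) ≠ a := by
    rw [← h1]
    exact fun hcon => z0_ne_z1 hq (σ1.injective hcon).symm
  set σ2 := Equiv.swap (σ1 (z1 hq)) b with hσ2
  refine ⟨σ1.trans σ2, ?_, ?_⟩
  · simp only [Equiv.trans_apply, h1]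
    exact Equiv.swap_apply_of_ne_of_ne hb'.symm hab
  · simp only [Equiv.trans_apply]
    exact Equiv.swap_apply_left _ _

lemma classify (hq : 2 ≤ q) (hv : FixedVec v) :
    ∃ x y : ℂ, v = fun i => x * v1 q i + y * v2 q i := by
  have hne := z0_ne_z1 hq
  refine ⟨v ((z0 hq, z0 hq), (z1 hq, z1 hq)), v ((z0 hq, z1 hq), (z1 hq, z0 hq)), ?_⟩
  have hZ : v ((z0 hq, z0 hq), (z0 hq, z0 hq))
      = v ((z0 hq, z0 hq), (z1 hq, z1 hq)) + v ((z0 hq, z1 hq), (z1 hq, z0 hq)) := by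
    have hr := rot_eq hq hv
    have hswap := fun (i : Idx q) => perm_eq hv (Equiv.swap (z0 hq) (z1 hq)) i
    have e1 := hswap ((z0 hq, z0 hq), (z0 hq, z0 hq))
    have e2 := hswap ((z0 hq, z0 hq), (z1 hq, z1 hq))
    have e3 := hswap ((z0 hq, z1 hq), (z1 hq, z0 hq))
    simp only [Equiv.swap_apply_left, Equiv.swap_apply_right] at e1 e2 e3
    linear_combination (-(1/2) : ℂ) * hr + (1/2 : ℂ) * e1 + (1/2 : ℂ) * e2 + (1/2 : ℂ) * e3
  funext i
  obtain ⟨⟨a1, b1⟩, a2, b2⟩ := i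
  by_cases hal : b1 = a1 ∧ b2 = a2 <;> by_cases hsw : b1 = a2 ∧ b2 = a1
  · -- both: a1 = a2 = b1 = b2
    obtain ⟨h1, h2⟩ := hal
    have ha : a2 = a1 := hsw.1.symm.trans h1
    rw [h1, h2, ha]
    have hp := perm_eq hv (Equiv.swap (z0 hq) a1) ((z0 hq, z0 hq), (z0 hq, z0 hq))
    simp only [Equiv.swap_apply_left] at hp
    rw [hp, hZ]
    simp [v1, v2]
  · -- aligned only
    obtain ⟨h1, h2⟩ := hal
    rw [h1, h2]
    have hne12 : a1 ≠ a2 := by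
      intro hcon
      exact hsw ⟨h1.trans hcon, h2.trans hcon.symm⟩
    obtain ⟨σ, hs0, hs1⟩ := exists_perm hq hne12
    have hp := perm_eq hv σ ((z0 hq, z0 hq), (z1 hq, z1 hq))
    rw [hs0, hs1] at hp
    rw [hp]
    simp [v1, v2, hne12, hne12.symm]
  · -- swapped only
    obtain ⟨h1, h2⟩ := hsw
    rw [h1, h2]
    have hne12 : a1 ≠ a2 := by
      intro hcon
      exact hal ⟨h1.trans hcon.symm, h2.trans hcon⟩
    obtain ⟨σ, hs0, hs1⟩ := exists_perm hq hne12
    have hp := perm_eq hv σ ((z0 hq, z1 hq), (z1 hq, z0 hq))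
    rw [hs0, hs1] at hp
    rw [hp]
    simp [v1, v2, hne12, hne12.symm]
  · -- neither: zero
    rw [support_lemma hv _ (by simp only [not_or]; exact ⟨fun h => hal ⟨h.1, h.2⟩, fun h => hsw ⟨h.1, h.2⟩⟩)]
    have hv1 : v1 q ((a1, b1), (a2, b2)) = 0 := by
      simp only [v1, ite_eq_right_iff]
      exact fun h => absurd ⟨h.1.symm, h.2.symm⟩ hal
    have hv2 : v2 q ((a1, b1), (a2, b2)) = 0 := by
      simp only [v2, ite_eq_right_iff]
      exact fun h => absurd ⟨h.2.symm, h.1.symm⟩ hsw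
    rw [hv1, hv2]
    ring

section Measure

variable {q : ℕ}

lemma continuous_entry (i j : Idx q) :
    Continuous fun U : Matrix.unitaryGroup (Fin q) ℂ => K2 (U : Matrix (Fin q) (Fin q) ℂ) i j := by
  have hc : ∀ a b : Fin q, Continuous fun U : Matrix.unitaryGroup (Fin q) ℂ =>
      (U : Matrix (Fin q) (Fin q) ℂ) a b := fun a b =>
    (continuous_apply b).comp ((continuous_apply a).comp continuous_subtype_val)
  simp only [K2_apply]
  exact ((hc _ _).mul (RCLike.continuous_conj.comp (hc _ _))).mul
    ((hc _ _).mul (RCLike.continuous_conj.comp (hc _ _)))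

instance haarU_inv (q : ℕ) : (haarU q).IsMulLeftInvariant :=
  Measure.isMulLeftInvariant_haarMeasure _

instance haarU_prob (q : ℕ) : IsProbabilityMeasure (haarU q) := by
  constructor
  rw [haarU, ← TopologicalSpace.PositiveCompacts.coe_top (α := Matrix.unitaryGroup (Fin q) ℂ)]
  exact Measure.haarMeasure_self

lemma integrable_entry (i j : Idx q) :
    Integrable (fun U : Matrix.unitaryGroup (Fin q) ℂ => K2 (U : Matrix (Fin q) (Fin q) ℂ) i j)
      (haarU q) := by
  apply (continuous_entry i j).integrable_of_hasCompactSupport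
  exact IsCompact.of_isClosed_subset isCompact_univ (isClosed_tsupport _) (Set.subset_univ _)

noncomputable def P (q : ℕ) : Matrix (Idx q) (Idx q) ℂ :=
  Matrix.of fun i j => ∫ U : Matrix.unitaryGroup (Fin q) ℂ,
    K2 (U : Matrix (Fin q) (Fin q) ℂ) i j ∂(haarU q)

lemma P_apply (i j : Idx q) : P q i j = ∫ U : Matrix.unitaryGroup (Fin q) ℂ,
    K2 (U : Matrix (Fin q) (Fin q) ℂ) i j ∂(haarU q) := rfl

lemma K2_mul_P {V : Matrix (Fin q) (Fin q) ℂ} (hV : V ∈ Matrix.unitaryGroup (Fin q) ℂ) :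
    K2 V * P q = P q := by
  funext i j
  rw [Matrix.mul_apply]
  calc ∑ k, K2 V i k * P q k j
      = ∑ k, ∫ U : Matrix.unitaryGroup (Fin q) ℂ,
          K2 V i k * K2 (U : Matrix (Fin q) (Fin q) ℂ) k j ∂(haarU q) := by
        refine Finset.sum_congr rfl fun k _ => ?_
        rw [P_apply, MeasureTheory.integral_const_mul]
    _ = ∫ U : Matrix.unitaryGroup (Fin q) ℂ,
          ∑ k, K2 V i k * K2 (U : Matrix (Fin q) (Fin q) ℂ) k j ∂(haarU q) := by
        rw [MeasureTheory.integral_finset_sum]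
        exact fun k _ => (integrable_entry k j).const_mul _
    _ = ∫ U : Matrix.unitaryGroup (Fin q) ℂ,
          K2 ((⟨V, hV⟩ * U : Matrix.unitaryGroup (Fin q) ℂ) : Matrix (Fin q) (Fin q) ℂ) i j
          ∂(haarU q) := by
        refine integral_congr_ae (Filter.Eventually.of_forall fun U => ?_)
        show ∑ k, K2 V i k * K2 (U : Matrix (Fin q) (Fin q) ℂ) k j
          = K2 ((⟨V, hV⟩ * U : Matrix.unitaryGroup (Fin q) ℂ) : Matrix (Fin q) (Fin q) ℂ) i j
        rw [MulMemClass.coe_mul, K2_mul, Matrix.mul_apply]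
    _ = P q i j := by
        rw [P_apply]
        exact integral_mul_left_eq_self
          (fun U : Matrix.unitaryGroup (Fin q) ℂ =>
            K2 (U : Matrix (Fin q) (Fin q) ℂ) i j) ⟨V, hV⟩

lemma P_col_fixed (j : Idx q) : FixedVec (fun i => P q i j) := by
  intro V hV
  funext i
  have := congrFun (congrFun (K2_mul_P hV) i) j
  rw [Matrix.mul_apply] at this
  exact this

lemma P_mulVec_fixed {u : Idx q → ℂ}
    (hu : ∀ U : Matrix.unitaryGroup (Fin q) ℂ, K2 (U : Matrix (Fin q) (Fin q) ℂ) *ᵥ u = u) :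
    P q *ᵥ u = u := by
  funext i
  calc (P q *ᵥ u) i = ∑ j, P q i j * u j := rfl
    _ = ∑ j, ∫ U : Matrix.unitaryGroup (Fin q) ℂ,
          K2 (U : Matrix (Fin q) (Fin q) ℂ) i j * u j ∂(haarU q) := by
        refine Finset.sum_congr rfl fun j _ => ?_
        rw [P_apply, MeasureTheory.integral_mul_const]
    _ = ∫ U : Matrix.unitaryGroup (Fin q) ℂ,
          ∑ j, K2 (U : Matrix (Fin q) (Fin q) ℂ) i j * u j ∂(haarU q) := by
        rw [MeasureTheory.integral_finset_sum]
        exact fun j _ => (integrable_entry i j).mul_const _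
    _ = ∫ _U : Matrix.unitaryGroup (Fin q) ℂ, u i ∂(haarU q) := by
        refine integral_congr_ae (Filter.Eventually.of_forall fun U => ?_)
        have := congrFun (hu U) i
        exact this
    _ = u i := by simp

lemma trace_P (hq : 2 ≤ q) : (P q).trace = 2 := by
  have hne := z0_ne_z1 hq
  -- classify each column
  have hcol : ∀ j : Idx q, ∃ x y : ℂ,
      (fun i => P q i j) = fun i => x * v1 q i + y * v2 q i :=
    fun j => classify hq (P_col_fixed j)
  choose x y hxy using hcol
  have hPij : ∀ i j, P q i j = x j * v1 q i + y j * v2 q i :=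
    fun i j => congrFun (hxy j) i
  have hfix1 : P q *ᵥ v1 q = v1 q :=
    P_mulVec_fixed fun U => K2_mulVec_v1 U.2
  have hfix2 : P q *ᵥ v2 q = v2 q :=
    P_mulVec_fixed fun U => K2_mulVec_v2 U.2
  set ix : Idx q := ((z0 hq, z0 hq), (z1 hq, z1 hq)) with hix
  set iy : Idx q := ((z0 hq, z1 hq), (z1 hq, z0 hq)) with hiy
  have hv1x : v1 q ix = 1 := by simp [v1, ix]
  have hv1y : v1 q iy = 0 := by simp [v1, iy, hne]
  have hv2x : v2 q ix = 0 := by simp [v2, ix, hne]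
  have hv2y : v2 q iy = 1 := by simp [v2, iy]
  have hA : ∀ i0 : Idx q, (∑ j, x j * v1 q j) * v1 q i0 + (∑ j, y j * v1 q j) * v2 q i0
      = v1 q i0 := by
    intro i0
    have := congrFun hfix1 i0
    rw [Matrix.mulVec, dotProduct] at this  -- (P *ᵥ v1) i0
    calc (∑ j, x j * v1 q j) * v1 q i0 + (∑ j, y j * v1 q j) * v2 q i0
        = ∑ j, P q i0 j * v1 q j := by
          simp only [hPij, Finset.sum_mul, add_mul]
          rw [← Finset.sum_add_distrib]
          refine Finset.sum_congr rfl fun j _ => ?_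
          ring
      _ = v1 q i0 := this
  have hB : ∀ i0 : Idx q, (∑ j, x j * v2 q j) * v1 q i0 + (∑ j, y j * v2 q j) * v2 q i0
      = v2 q i0 := by
    intro i0
    have := congrFun hfix2 i0
    rw [Matrix.mulVec, dotProduct] at this
    calc (∑ j, x j * v2 q j) * v1 q i0 + (∑ j, y j * v2 q j) * v2 q i0
        = ∑ j, P q i0 j * v2 q j := by
          simp only [hPij, Finset.sum_mul, add_mul]
          rw [← Finset.sum_add_distrib]
          refine Finset.sum_congr rfl fun j _ => ?_
          ring
      _ = v2 q i0 := this
  have hAx := hA ix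
  have hDy := hB iy
  rw [hv1x, hv2x] at hAx
  rw [hv1y, hv2y] at hDy
  -- hAx : (∑ j, x j * v1 q j) * 1 + (∑ j, y j * v1 q j) * 0 = 1
  -- hDy : (∑ j, x j * v2 q j) * 0 + (∑ j, y j * v2 q j) * 1 = 1
  have htr : (P q).trace = (∑ j, x j * v1 q j) + (∑ j, y j * v2 q j) := by
    rw [Matrix.trace]
    simp only [Matrix.diag, hPij]
    rw [Finset.sum_add_distrib]
  rw [htr]
  rw [mul_one, mul_zero, add_zero] at hAx
  rw [mul_one, mul_zero, zero_add] at hDy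
  rw [hAx, hDy]
  norm_num

end Measure

end FM

/-- For every `q ≥ 2`, the fourth absolute moment of the trace over the unitary
group satisfies `∫_{U(q)} |tr U|⁴ dU = 2`, with respect to the unit-normalized Haar measure. -/
theorem haar_fourth_trace_moment (hq : 2 ≤ q) :
    ∫ U : Matrix.unitaryGroup (Fin q) ℂ,
        ‖Matrix.trace ((U : Matrix (Fin q) (Fin q) ℂ))‖ ^ 4 ∂(haarU q) = 2 := by
  have h1 : (FM.P q).trace = 2 := FM.trace_P hq
  have h2 : (FM.P q).trace = ∫ U : Matrix.unitaryGroup (Fin q) ℂ,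
      (FM.K2 (U : Matrix (Fin q) (Fin q) ℂ)).trace ∂(haarU q) := by
    rw [Matrix.trace]
    simp only [Matrix.diag, FM.P_apply]
    rw [← MeasureTheory.integral_finset_sum _ (fun i _ => FM.integrable_entry i i)]
    rfl
  have h3 : (FM.P q).trace = ∫ U : Matrix.unitaryGroup (Fin q) ℂ,
      ((‖Matrix.trace ((U : Matrix (Fin q) (Fin q) ℂ))‖ ^ 4 : ℝ) : ℂ) ∂(haarU q) := by
    rw [h2]
    refine MeasureTheory.integral_congr_ae (Filter.Eventually.of_forall fun U => ?_)
    show (FM.K2 ((U : Matrix (Fin q) (Fin q) ℂ))).trace = _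
    rw [FM.trace_K2]
    push_cast
    ring
  have h5 := h3.symm.trans h1
  have hoi := _root_.integral_ofReal (𝕜 := ℂ) (μ := haarU q)
    (f := fun U : Matrix.unitaryGroup (Fin q) ℂ =>
      ‖Matrix.trace ((U : Matrix (Fin q) (Fin q) ℂ))‖ ^ 4)
  have h7 : (RCLike.ofReal (∫ U : Matrix.unitaryGroup (Fin q) ℂ,
      ‖Matrix.trace ((U : Matrix (Fin q) (Fin q) ℂ))‖ ^ 4 ∂(haarU q)) : ℂ)
      = (2 : ℂ) := hoi.symm.trans h5
  have h8 : (RCLike.ofReal (2 : ℝ) : ℂ) = (2 : ℂ) := by norm_num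
  exact RCLike.ofReal_inj.mp (h7.trans h8.symm)
end

section
/- Let G be a finite group acting by unitary operators ρ(g) on a finite-dimensional complex inner product space V. Let W ⊆ V be a G-invariant subspace on which the restricted action is irreducible with character λ. Let M ⊆ End(V) be a subspace invariant under the conjugation action E ↦ ρ(g) ∘ E ∘ ρ(g)⁻¹, and let χ_M(g) denote the trace of this conjugation action of g on M. If (1/|G|)·Σ_{g∈G} |λ(g)|²·χ_M(g) = 0, then for every E ∈ M and all ψ, φ ∈ W, the inner product ⟨ψ, E φ⟩ = 0. -/
open scoped InnerProductSpace

open LinearMap TensorProduct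

noncomputable section
set_option maxHeartbeats 1000000

def conjHom {R M N : Type*} [CommRing R] [AddCommGroup M] [Module R M]
    [AddCommGroup N] [Module R N] (a : N →ₗ[R] N) (b : M →ₗ[R] M) :
    (M →ₗ[R] N) →ₗ[R] (M →ₗ[R] N) where
  toFun f := a ∘ₗ f ∘ₗ b
  map_add' f g := by ext; simp
  map_smul' c f := by ext; simp

@[simp] lemma conjHom_apply {R M N : Type*} [CommRing R] [AddCommGroup M] [Module R M]
    [AddCommGroup N] [Module R N] (a : N →ₗ[R] N) (b : M →ₗ[R] M) (f : M →ₗ[R] N) :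
    conjHom a b f = a ∘ₗ f ∘ₗ b := rfl

lemma trace_conjHom {R M N : Type*} [Field R] [AddCommGroup M] [Module R M]
    [AddCommGroup N] [Module R N] [FiniteDimensional R M] [FiniteDimensional R N]
    (a : N →ₗ[R] N) (b : M →ₗ[R] M) :
    trace R (M →ₗ[R] N) (conjHom a b) = trace R N a * trace R M b := by
  have key : conjHom a b =
      (dualTensorHomEquiv R M N).conj
        (TensorProduct.map (Module.Dual.transpose (R := R) b) a) := by
    rw [LinearEquiv.conj_apply]
    rw [LinearEquiv.eq_comp_toLinearMap_symm]
    apply TensorProduct.ext'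
    intro φ n
    ext x
    simp [dualTensorHomEquiv, Module.Dual.transpose_apply]
  have h1 : trace R (M →ₗ[R] N)
      ((dualTensorHomEquiv R M N).conj
        (TensorProduct.map (Module.Dual.transpose (R := R) b) a)) =
      trace R (Module.Dual R M ⊗[R] N)
        (TensorProduct.map (Module.Dual.transpose (R := R) b) a) :=
    @trace_conj' R _ (Module.Dual R M ⊗[R] N) _ _ (M →ₗ[R] N) _ _ _
      (dualTensorHomEquiv R M N)
  rw [key, h1, trace_tensorProduct', trace_transpose', mul_comm]

lemma conjHom_comp_conjHom {R M N : Type*} [CommRing R] [AddCommGroup M] [Module R M]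
    [AddCommGroup N] [Module R N] (a a' : N →ₗ[R] N) (b b' : M →ₗ[R] M) :
    conjHom a b ∘ₗ conjHom a' b' = conjHom (a ∘ₗ a') (b' ∘ₗ b) := by
  ext f : 1; simp [comp_assoc]

lemma invariant_eq_zero_of_sum_trace_eq_zero
    {G : Type*} [Group G] [Fintype G]
    {U : Type*} [AddCommGroup U] [Module ℂ U] [FiniteDimensional ℂ U]
    (σ : G → (U →ₗ[ℂ] U))
    (hmul : ∀ g h : G, σ g ∘ₗ σ h = σ (g * h))
    (htr : ∑ g : G, trace ℂ U (σ g) = 0)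
    (u : U) (hu : ∀ g : G, σ g u = u) : u = 0 := by
  have hcard : (Fintype.card G : ℂ) ≠ 0 := Nat.cast_ne_zero.mpr Fintype.card_ne_zero
  set π : U →ₗ[ℂ] U := (Fintype.card G : ℂ)⁻¹ • ∑ g : G, σ g with hπ
  have hπ_apply : ∀ x : U, π x = (Fintype.card G : ℂ)⁻¹ • ∑ g : G, σ g x := by
    intro x; simp [hπ, LinearMap.sum_apply]
  have hσπ : ∀ (h : G) (x : U), σ h (π x) = π x := by
    intro h x
    rw [hπ_apply, map_smul, map_sum]
    congr 1
    have : ∀ g : G, σ h (σ g x) = σ (h * g) x := fun g => by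
      rw [← hmul]; rfl
    rw [Finset.sum_congr rfl fun g _ => this g]
    exact Fintype.sum_equiv (Equiv.mulLeft h) _ _ (fun g => rfl)
  have hidem : ∀ x : U, π (π x) = π x := by
    intro x
    rw [hπ_apply (π x)]
    rw [Finset.sum_congr rfl fun g _ => hσπ g x]
    rw [Finset.sum_const, Finset.card_univ, ← Nat.cast_smul_eq_nsmul ℂ,
      smul_smul, inv_mul_cancel₀ hcard, one_smul]
  have hproj : IsProj (range π) π := by
    constructor
    · intro x; exact mem_range_self π x
    · rintro x ⟨y, rfl⟩; exact hidem y
  have htrπ : trace ℂ U π = 0 := by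
    rw [hπ, map_smul, map_sum, htr, smul_zero]
  have hrank : (Module.finrank ℂ (range π) : ℂ) = 0 := by
    rw [← hproj.trace, htrπ]
  have hbot : range π = ⊥ := by
    rw [← Submodule.finrank_eq_zero (R := ℂ)]
    exact_mod_cast hrank
  have hπ0 : π = 0 := range_eq_bot.mp hbot
  have : π u = u := by
    rw [hπ_apply, Finset.sum_congr rfl fun g _ => hu g, Finset.sum_const,
      Finset.card_univ, ← Nat.cast_smul_eq_nsmul ℂ, smul_smul,
      inv_mul_cancel₀ hcard, one_smul]
  rw [← this, hπ0, LinearMap.zero_apply]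

/-- Let a finite group `G` act by unitary operators `ρ g` on a finite-dimensional
complex inner product space `V`, let `W ⊆ V` be a `G`-invariant subspace on which the restricted
action is irreducible with character `lam`, and let `M ⊆ End(V)` be a subspace invariant under
conjugation `E ↦ ρ g ∘ E ∘ ρ g⁻¹`, with `chiM g` the trace of the conjugation action of `g`
on `M` (here `Φ g` is the conjugation action of `g` on `M`). If
`(1/|G|) · Σ_g |lam g|² · chiM g = 0`, then `⟪ψ, E φ⟫ = 0` for every `E ∈ M`, `ψ, φ ∈ W`. -/
theorem inner_eq_zero_of_twisted_average_zero
    {G : Type*} [Group G] [Fintype G]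
    {V : Type*} [NormedAddCommGroup V] [InnerProductSpace ℂ V] [FiniteDimensional ℂ V]
    (ρ : G →* (V →ₗ[ℂ] V))
    (hunitary : ∀ g : G, ∀ ψ φ : V, ⟪ρ g ψ, ρ g φ⟫_ℂ = ⟪ψ, φ⟫_ℂ)
    (W : Submodule ℂ V) (hW : W ≠ ⊥)
    (hWinv : ∀ g : G, ∀ v ∈ W, ρ g v ∈ W)
    (hWirr : ∀ p : Submodule ℂ V, p ≤ W → (∀ g : G, ∀ v ∈ p, ρ g v ∈ p) → p = ⊥ ∨ p = W)
    (lam : G → ℂ) (hlam : ∀ g : G, lam g = LinearMap.trace ℂ W ((ρ g).restrict (hWinv g)))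
    (M : Submodule ℂ (V →ₗ[ℂ] V))
    (hMinv : ∀ g : G, ∀ E ∈ M, (ρ g) ∘ₗ E ∘ₗ (ρ g⁻¹) ∈ M)
    (Φ : G → (M →ₗ[ℂ] M))
    (hΦ : ∀ g : G, ∀ E : M, ((Φ g E : V →ₗ[ℂ] V)) = (ρ g) ∘ₗ (E : V →ₗ[ℂ] V) ∘ₗ (ρ g⁻¹))
    (chiM : G → ℂ) (hchiM : ∀ g : G, chiM g = LinearMap.trace ℂ M (Φ g))
    (havg : (Fintype.card G : ℂ)⁻¹ * ∑ g : G, (‖lam g‖ : ℂ) ^ 2 * chiM g = 0) :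
    ∀ E ∈ M, ∀ ψ ∈ W, ∀ φ ∈ W, ⟪ψ, E φ⟫_ℂ = 0 := by
  classical
  set r : G → (W →ₗ[ℂ] W) := fun g => (ρ g).restrict (hWinv g) with hrdef
  have hr_coe : ∀ (g : G) (w : W), ((r g w : V)) = ρ g (w : V) := fun g w => rfl
  have hmul' : ∀ (g h : G) (x : V), ρ (g * h) x = ρ g (ρ h x) := by
    intro g h x; rw [map_mul]; rfl
  have hρ_inv : ∀ (g : G) (v : V), ρ g (ρ g⁻¹ v) = v := by
    intro g v
    rw [← hmul', mul_inv_cancel, map_one]; rfl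
  have hr_mul : ∀ g h : G, r g ∘ₗ r h = r (g * h) := by
    intro g h; ext w
    simp only [LinearMap.comp_apply, hr_coe, hmul']
  have hadj : ∀ (g : G) (x y : V), ⟪ρ g x, y⟫_ℂ = ⟪x, ρ g⁻¹ y⟫_ℂ := by
    intro g x y
    conv_lhs => rw [← hρ_inv g y]
    rw [hunitary]
  -- the orthogonal projection onto W, as a linear map
  set P : V →ₗ[ℂ] W := (W.orthogonalProjectionOnto : V →L[ℂ] W).toLinearMap with hPdef
  have hP_coe : ∀ v : V, P v = W.orthogonalProjectionOnto v := fun v => rfl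
  have hPmem : ∀ v : V, ∀ w ∈ W, ⟪v - (P v : V), w⟫_ℂ = 0 := by
    intro v w hw
    exact Submodule.inner_left_of_mem_orthogonal hw
      (by rw [hP_coe, Submodule.coe_orthogonalProjectionOnto_apply]
          exact Submodule.sub_starProjection_mem_orthogonal v)
  have hPcomm : ∀ (g : G) (v : V), ((P (ρ g v) : V)) = ρ g (P v : V) := by
    intro g v
    rw [hP_coe, Submodule.coe_orthogonalProjectionOnto_apply]
    apply Submodule.eq_starProjection_of_mem_of_inner_eq_zero
    · exact hWinv g _ (SetLike.coe_mem _)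
    · intro w hw
      rw [← map_sub, hadj]
      exact hPmem v _ (hWinv g⁻¹ w hw)
  -- Φ is multiplicative
  have hΦmul : ∀ (g h : G) (E : M), Φ g (Φ h E) = Φ (g * h) E := by
    intro g h E
    apply Subtype.ext
    rw [hΦ, hΦ, hΦ]
    ext v
    simp only [LinearMap.comp_apply, hmul', mul_inv_rev]
  -- the equivariant map B
  set B : M →ₗ[ℂ] (W →ₗ[ℂ] W) :=
    { toFun := fun E => P ∘ₗ (E : V →ₗ[ℂ] V) ∘ₗ W.subtype
      map_add' := by intro E F; ext w; simp
      map_smul' := by intro c E; ext w; simp } with hBdef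
  have hB_apply : ∀ (E : M) (w : W), ((B E w : V)) = P ((E : V →ₗ[ℂ] V) w) := by
    intro E w; rfl
  -- the representation on Hom(M, End(W))
  set σ : G → ((M →ₗ[ℂ] (W →ₗ[ℂ] W)) →ₗ[ℂ] (M →ₗ[ℂ] (W →ₗ[ℂ] W))) :=
    fun g => conjHom (conjHom (r g) (r g⁻¹)) (Φ g⁻¹) with hσdef
  have hσmul : ∀ g h : G, σ g ∘ₗ σ h = σ (g * h) := by
    intro g h
    rw [hσdef]
    simp only
    rw [conjHom_comp_conjHom, conjHom_comp_conjHom, hr_mul, hr_mul]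
    have h1 : Φ h⁻¹ ∘ₗ Φ g⁻¹ = Φ (g * h)⁻¹ := by
      ext E; simp only [LinearMap.comp_apply]
      rw [hΦmul, mul_inv_rev]
    have h2 : h⁻¹ * g⁻¹ = (g * h)⁻¹ := (mul_inv_rev g h).symm
    rw [h1, h2]
  have hσB : ∀ g : G, σ g B = B := by
    intro g
    ext E w
    show ((r g) ((B (Φ g⁻¹ E)) ((r g⁻¹) w)) : V) = ((B E w : V))
    rw [hr_coe, hB_apply, hB_apply]
    have hc : ((Φ g⁻¹ E : V →ₗ[ℂ] V)) ((r g⁻¹ w : V)) =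
        ρ g⁻¹ ((E : V →ₗ[ℂ] V) (w : V)) := by
      rw [hΦ, hr_coe]
      simp only [LinearMap.comp_apply, inv_inv, hρ_inv]
    rw [hc, ← hPcomm, hρ_inv]
  -- traces
  have htrσ : ∀ g : G, LinearMap.trace ℂ _ (σ g) = lam g * lam g⁻¹ * chiM g⁻¹ := by
    intro g
    rw [hσdef]
    simp only
    rw [trace_conjHom, trace_conjHom, hlam, hlam, hchiM]
  -- lam g⁻¹ = conj (lam g)
  have hadjW : ∀ (g : G) (x y : W), ⟪r g x, y⟫_ℂ = ⟪x, r g⁻¹ y⟫_ℂ := by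
    intro g x y
    rw [Submodule.coe_inner, Submodule.coe_inner, hr_coe, hr_coe, hadj]
  have htr_sum : ∀ A : W →ₗ[ℂ] W,
      LinearMap.trace ℂ W A = ∑ i, ⟪(stdOrthonormalBasis ℂ W) i, A ((stdOrthonormalBasis ℂ W) i)⟫_ℂ := by
    intro A
    set b := stdOrthonormalBasis ℂ W
    rw [LinearMap.trace_eq_matrix_trace ℂ b.toBasis, Matrix.trace]
    congr 1
    ext i
    rw [Matrix.diag_apply, LinearMap.toMatrix_apply, OrthonormalBasis.coe_toBasis_repr_apply,
      OrthonormalBasis.repr_apply_apply, OrthonormalBasis.coe_toBasis]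
  have hconj : ∀ g : G, lam g⁻¹ = starRingEnd ℂ (lam g) := by
    intro g
    rw [hlam, hlam]
    show LinearMap.trace ℂ W (r g⁻¹) = starRingEnd ℂ (LinearMap.trace ℂ W (r g))
    rw [htr_sum, htr_sum, map_sum]
    congr 1
    ext i
    rw [← hadjW g]
    exact (inner_conj_symm _ _).symm
  -- the trace sum vanishes
  have hcard : (Fintype.card G : ℂ) ≠ 0 := Nat.cast_ne_zero.mpr Fintype.card_ne_zero
  have hsum : ∑ g : G, (‖lam g‖ : ℂ) ^ 2 * chiM g = 0 := by
    rcases mul_eq_zero.mp havg with h | h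
    · exact absurd h (inv_ne_zero hcard)
    · exact h
  have htr0 : ∑ g : G, LinearMap.trace ℂ _ (σ g) = 0 := by
    rw [Finset.sum_congr rfl fun g _ => htrσ g]
    rw [show ∑ g : G, lam g * lam g⁻¹ * chiM g⁻¹ =
        ∑ g : G, lam g⁻¹ * lam g * chiM g from
      Fintype.sum_equiv (Equiv.inv G) _ _ (fun g => by simp [mul_comm])]
    rw [← hsum]
    congr 1
    ext g
    rw [hconj g]
    rw [← Complex.ofReal_pow, Complex.sq_norm, ← Complex.mul_conj]
    ring
  -- conclude B = 0
  have hB0 : B = 0 := invariant_eq_zero_of_sum_trace_eq_zero σ hσmul htr0 B hσB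
  -- finish
  intro E hE ψ hψ φ hφ
  have hPE : P ((E : V →ₗ[ℂ] V) φ) = 0 := by
    have := congrArg (fun f => f (⟨E, hE⟩ : M) (⟨φ, hφ⟩ : W)) hB0
    simpa [hBdef] using this
  have : ((E : V →ₗ[ℂ] V) φ : V) = E φ := rfl
  calc ⟪ψ, E φ⟫_ℂ = ⟪ψ, E φ - (P (E φ) : V)⟫_ℂ := by
        rw [show P (E φ) = (0 : W) from hPE, Submodule.coe_zero, sub_zero]
      _ = 0 := Submodule.inner_right_of_mem_orthogonal hψ
        (by rw [hP_coe, Submodule.coe_orthogonalProjectionOnto_apply]; exact Submodule.sub_starProjection_mem_orthogonal _)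
end
end
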